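/- Let X \in RV_{-\beta} and Y \in RV_{-\gamma} be random variables with \beta, \gamma > 0, and suppose \bar{F}_X(x) \sim \lambda \bar{F}_Y(x^{\beta/\gamma}) as x \to \infty for some \lambda > 0. Then VaR_\alpha(X) \sim \lambda^{1/\beta} VaR_\alpha(Y)^{\gamma/\beta} as \alpha \to 1. -/

import Mathlib

open MeasureTheory ProbabilityTheory Filter Topology

/-- Tail probability function of a random variable. -/
noncomputable def tail {Ω : Type*} [MeasurableSpace Ω] (P : Measure Ω) (X : Ω → ℝ) (x : ℝ) : ℝ :=
  (P {ω | x < X ω}).toReal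

/-- Distribution function of a random variable. -/
noncomputable def cdf' {Ω : Type*} [MeasurableSpace Ω] (P : Measure Ω) (X : Ω → ℝ) (x : ℝ) : ℝ :=
  (P {ω | X ω ≤ x}).toReal

/-- Value at Risk: the α-quantile. -/
noncomputable def VaR {Ω : Type*} [MeasurableSpace Ω] (P : Measure Ω) (X : Ω → ℝ) (α : ℝ) : ℝ :=
  sInf {x : ℝ | α ≤ cdf' P X x}

/-- f is regularly varying (at infinity) with index k. -/
def RegVary (f : ℝ → ℝ) (k : ℝ) : Prop :=
  ∀ t : ℝ, 0 < t → Tendsto (fun x => f (t * x) / f x) atTop (𝓝 (t ^ k))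

set_option linter.unusedSectionVars false

section helpers
variable {Ω : Type*} [MeasurableSpace Ω] (P : Measure Ω) [IsProbabilityMeasure P] (Z : Ω → ℝ)

lemma tail_nonneg (x : ℝ) : 0 ≤ tail P Z x := ENNReal.toReal_nonneg

lemma tail_anti : Antitone (tail P Z) := by
  intro x y hxy
  exact ENNReal.toReal_mono (measure_ne_top _ _)
    (measure_mono (fun ω hω => lt_of_le_of_lt hxy hω))

lemma tail_lt_of_lt {x y : ℝ} (h : tail P Z x < tail P Z y) : y < x := by
  by_contra hc
  push_neg at hc
  exact absurd (tail_anti P Z hc) (not_le.mpr h)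

lemma cdf'_eq (hZ : Measurable Z) (x : ℝ) : cdf' P Z x = 1 - tail P Z x := by
  have hms : MeasurableSet {ω | Z ω ≤ x} := hZ measurableSet_Iic
  have hcompl : {ω | Z ω ≤ x}ᶜ = {ω | x < Z ω} := by
    ext ω; simp [not_le]
  have hadd : P {ω | Z ω ≤ x} + P {ω | x < Z ω} = 1 := by
    rw [← hcompl, measure_add_measure_compl hms, measure_univ]
  have := congrArg ENNReal.toReal hadd
  rw [ENNReal.toReal_add (measure_ne_top _ _) (measure_ne_top _ _)] at this
  simp only [ENNReal.toReal_one] at this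
  unfold cdf' tail
  linarith

lemma VaR_eq (hZ : Measurable Z) (α : ℝ) :
    VaR P Z α = sInf {x | tail P Z x ≤ 1 - α} := by
  unfold VaR
  congr 1
  ext x
  rw [Set.mem_setOf_eq, Set.mem_setOf_eq, cdf'_eq P Z hZ]
  constructor <;> intro <;> linarith

lemma tail_pos {k : ℝ} (hk : 0 < k) (hRV : RegVary (tail P Z) (-k)) (x : ℝ) :
    0 < tail P Z x := by
  by_contra h
  push_neg at h
  have hx0 : tail P Z x = 0 := le_antisymm h (tail_nonneg P Z x)
  have hzero : ∀ᶠ y in atTop, tail P Z (2 * y) / tail P Z y = 0 := by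
    filter_upwards [eventually_ge_atTop (max x 0)] with y hy
    have hyx : x ≤ y := le_trans (le_max_left _ _) hy
    have : tail P Z y = 0 :=
      le_antisymm (hx0 ▸ tail_anti P Z hyx) (tail_nonneg P Z y)
    rw [this, div_zero]
  have h1 : Tendsto (fun y => tail P Z (2 * y) / tail P Z y) atTop (𝓝 0) :=
    Tendsto.congr' (by filter_upwards [hzero] with y hy; exact hy.symm) tendsto_const_nhds
  have h2 := hRV 2 two_pos
  have := tendsto_nhds_unique h1 h2
  have hpos : (0:ℝ) < (2:ℝ) ^ (-k) := Real.rpow_pos_of_pos two_pos _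
  rw [← this] at hpos
  exact lt_irrefl _ hpos

lemma tail_small {k : ℝ} (hk : 0 < k) (hRV : RegVary (tail P Z) (-k)) {c : ℝ} (hc : 0 < c) :
    ∃ x, tail P Z x ≤ c := by
  set r : ℝ := (2:ℝ) ^ (-k) with hr
  have hr0 : 0 < r := Real.rpow_pos_of_pos two_pos _
  have hr1 : r < 1 := Real.rpow_lt_one_of_one_lt_of_neg one_lt_two (neg_neg_of_pos hk)
  set r' : ℝ := (r + 1) / 2 with hr'
  have hrr' : r < r' := by rw [hr']; linarith
  have hr'1 : r' < 1 := by rw [hr']; linarith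
  have hr'0 : 0 < r' := by rw [hr']; linarith
  have hev : ∀ᶠ y in atTop, tail P Z (2 * y) / tail P Z y < r' :=
    (hRV 2 two_pos).eventually_lt_const hrr'
  obtain ⟨N, hN⟩ := hev.exists_forall_of_atTop
  set N' : ℝ := max N 1 with hN'
  have hN'1 : (1:ℝ) ≤ N' := le_max_right _ _
  have hstep : ∀ n : ℕ, tail P Z (N' * 2 ^ n) ≤ r' ^ n * tail P Z N' := by
    intro n
    induction n with
    | zero => simp
    | succ n ih =>
        have hx : N ≤ N' * 2 ^ n := by
          calc N ≤ N' := le_max_left _ _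
          _ ≤ N' * 2 ^ n := le_mul_of_one_le_right (by linarith) (one_le_pow₀ one_le_two)
        have hpos := tail_pos P Z hk hRV (N' * 2 ^ n)
        have hlt := hN _ hx
        rw [div_lt_iff₀ hpos] at hlt
        have heq : (2:ℝ) * (N' * 2 ^ n) = N' * 2 ^ (n + 1) := by ring
        rw [heq] at hlt
        calc tail P Z (N' * 2 ^ (n+1)) ≤ r' * tail P Z (N' * 2 ^ n) := le_of_lt hlt
        _ ≤ r' * (r' ^ n * tail P Z N') := by
            exact mul_le_mul_of_nonneg_left ih (le_of_lt hr'0)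
        _ = r' ^ (n + 1) * tail P Z N' := by ring
  have hlim : Tendsto (fun n : ℕ => r' ^ n * tail P Z N') atTop (𝓝 0) := by
    have := tendsto_pow_atTop_nhds_zero_of_lt_one (le_of_lt hr'0) hr'1
    simpa using this.mul_const (tail P Z N')
  obtain ⟨n, hn⟩ := (hlim.eventually_lt_const hc).exists
  exact ⟨N' * 2 ^ n, le_of_lt (lt_of_le_of_lt (hstep n) hn)⟩

lemma tail_rightCont {s c : ℝ} (hc : 0 ≤ c)
    (h : ∀ n : ℕ, tail P Z (s + 1 / (n + 1)) ≤ c) : tail P Z s ≤ c := by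
  have hset : {ω | s < Z ω} = ⋃ n : ℕ, {ω | s + 1 / (n + 1) < Z ω} := by
    ext ω
    simp only [Set.mem_setOf_eq, Set.mem_iUnion]
    constructor
    · intro hω
      obtain ⟨n, hn⟩ := exists_nat_one_div_lt (sub_pos.mpr hω)
      exact ⟨n, by push_cast at hn ⊢; linarith⟩
    · rintro ⟨n, hn⟩
      have : (0:ℝ) < 1 / ((n:ℝ) + 1) := by positivity
      linarith
  have hmono : Monotone (fun n : ℕ => {ω | s + 1 / ((n:ℝ) + 1) < Z ω}) := by
    intro m n hmn ω hω
    simp only [Set.mem_setOf_eq] at hω ⊢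
    have h1 : (1:ℝ) / ((n:ℝ) + 1) ≤ 1 / ((m:ℝ) + 1) := by
      apply one_div_le_one_div_of_le (by positivity)
      exact_mod_cast add_le_add_left (Nat.cast_le.mpr hmn) 1
    linarith
  unfold tail
  rw [hset, hmono.measure_iUnion]
  have hsup : (⨆ n : ℕ, P {ω | s + 1 / ((n:ℝ) + 1) < Z ω}) ≤ ENNReal.ofReal c := by
    apply iSup_le
    intro n
    rw [← ENNReal.ofReal_toReal (measure_ne_top P _)]
    exact ENNReal.ofReal_le_ofReal (h n)
  exact ENNReal.toReal_le_of_le_ofReal hc hsup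
end helpers

section quantile
variable {Ω : Type*} [MeasurableSpace Ω] (P : Measure Ω) [IsProbabilityMeasure P] (Z : Ω → ℝ)

lemma VaR_set_bddBelow {α : ℝ} (h0 : 1 - α < tail P Z 0) :
    BddBelow {x | tail P Z x ≤ 1 - α} := by
  refine ⟨0, fun x hx => ?_⟩
  rw [Set.mem_setOf_eq] at hx
  exact le_of_lt (tail_lt_of_lt P Z (lt_of_le_of_lt hx h0))

lemma VaR_ge (hZ : Measurable Z) {α : ℝ} (hne : ∃ x, tail P Z x ≤ 1 - α)
    {c : ℝ} (hc : 1 - α < tail P Z c) : c ≤ VaR P Z α := by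
  rw [VaR_eq P Z hZ]
  exact le_csInf hne fun y hy => le_of_lt (tail_lt_of_lt P Z (lt_of_le_of_lt hy hc))

lemma VaR_le (hZ : Measurable Z) {α : ℝ} (h0 : 1 - α < tail P Z 0)
    {y : ℝ} (hy : tail P Z y ≤ 1 - α) : VaR P Z α ≤ y := by
  rw [VaR_eq P Z hZ]
  exact csInf_le (VaR_set_bddBelow P Z h0) hy

lemma tail_VaR_le (hZ : Measurable Z) {α : ℝ} (hne : ∃ x, tail P Z x ≤ 1 - α)
    (h0 : 1 - α < tail P Z 0) : tail P Z (VaR P Z α) ≤ 1 - α := by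
  have hα : 0 ≤ 1 - α := by
    obtain ⟨x, hx⟩ := hne
    exact le_trans (tail_nonneg P Z x) hx
  apply tail_rightCont P Z hα
  intro n
  have hpos : (0:ℝ) < 1 / ((n:ℝ) + 1) := by positivity
  rw [VaR_eq P Z hZ]
  obtain ⟨x, hxS, hxlt⟩ := exists_lt_of_csInf_lt hne
    (lt_add_of_pos_right (sInf {x | tail P Z x ≤ 1 - α}) hpos)
  exact le_trans (tail_anti P Z (le_of_lt hxlt)) hxS

lemma lt_tail_of_lt_VaR (hZ : Measurable Z) {α : ℝ} (h0 : 1 - α < tail P Z 0)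
    {v : ℝ} (hv : v < VaR P Z α) : 1 - α < tail P Z v := by
  by_contra hc
  push_neg at hc
  exact absurd (VaR_le P Z hZ h0 hc) (not_le.mpr hv)
end quantile

section mainlemmas
variable {Ω : Type*} [MeasurableSpace Ω] (P : Measure Ω) [IsProbabilityMeasure P]

lemma div_mul_div_aux {a b c : ℝ} (hb : b ≠ 0) : a / b * (b / c) = a / c := by
  field_simp

lemma lim_one (X Y : Ω → ℝ) {β γ lam : ℝ} (hβ : 0 < β) (hγ : 0 < γ) (hlam : 0 < lam)
    (hRVY : RegVary (tail P Y) (-γ))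
    (hposY : ∀ x, 0 < tail P Y x)
    (hsim : Tendsto (fun x => tail P X x / (lam * tail P Y (x ^ (β / γ)))) atTop (𝓝 1)) :
    Tendsto (fun v => tail P X (lam ^ (1/β) * v ^ (γ/β)) / tail P Y v) atTop (𝓝 1) := by
  set h : ℝ → ℝ := fun v => lam ^ (1/β) * v ^ (γ/β) with hh
  have hL0 : Tendsto h atTop atTop :=
    (tendsto_rpow_atTop (by positivity : (0:ℝ) < γ/β)).const_mul_atTop
      (Real.rpow_pos_of_pos hlam _)
  have key1 : Tendsto (fun v => tail P X (h v) / (lam * tail P Y ((h v) ^ (β/γ)))) atTop (𝓝 1) :=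
    hsim.comp hL0
  have hcongr : ∀ᶠ v in atTop, (h v) ^ (β/γ) = lam ^ (1/γ) * v := by
    filter_upwards [eventually_ge_atTop (0:ℝ)] with v hv
    rw [hh]
    simp only
    rw [Real.mul_rpow (le_of_lt (Real.rpow_pos_of_pos hlam _)) (Real.rpow_nonneg hv _),
      ← Real.rpow_mul hlam.le, ← Real.rpow_mul hv,
      show (1/β)*(β/γ) = 1/γ by field_simp,
      show (γ/β)*(β/γ) = 1 by field_simp, Real.rpow_one]
  have key2 : Tendsto (fun v => tail P X (h v) / (lam * tail P Y (lam ^ (1/γ) * v)))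
      atTop (𝓝 1) := by
    apply key1.congr'
    filter_upwards [hcongr] with v hv
    rw [hv]
  have hfac := hRVY (lam ^ (1/γ)) (Real.rpow_pos_of_pos hlam _)
  have hval : ((lam ^ (1/γ)) : ℝ) ^ (-γ) = lam⁻¹ := by
    rw [← Real.rpow_mul hlam.le, show (1/γ)*(-γ) = -1 by field_simp, Real.rpow_neg_one]
  have key3 : Tendsto (fun v => lam * tail P Y (lam ^ (1/γ) * v) / tail P Y v)
      atTop (𝓝 1) := by
    have h2 := hfac.const_mul lam
    rw [hval, mul_inv_cancel₀ hlam.ne'] at h2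
    exact h2.congr (fun v => by ring)
  have hmul := key2.mul key3
  rw [one_mul] at hmul
  apply hmul.congr'
  filter_upwards [] with v
  exact div_mul_div_aux (by
    have := hposY (lam ^ (1/γ) * v)
    positivity)

lemma lim_t (X Y : Ω → ℝ) {β γ lam : ℝ} (hβ : 0 < β) (hγ : 0 < γ) (hlam : 0 < lam)
    (hRVX : RegVary (tail P X) (-β))
    (hposX : ∀ x, 0 < tail P X x)
    (hL1 : Tendsto (fun v => tail P X (lam ^ (1/β) * v ^ (γ/β)) / tail P Y v) atTop (𝓝 1))
    {t : ℝ} (ht : 0 < t) :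
    Tendsto (fun v => tail P X (t * (lam ^ (1/β) * v ^ (γ/β))) / tail P Y v)
      atTop (𝓝 (t ^ (-β))) := by
  set h : ℝ → ℝ := fun v => lam ^ (1/β) * v ^ (γ/β) with hh
  have hL0 : Tendsto h atTop atTop :=
    (tendsto_rpow_atTop (by positivity : (0:ℝ) < γ/β)).const_mul_atTop
      (Real.rpow_pos_of_pos hlam _)
  have k1 : Tendsto (fun v => tail P X (t * h v) / tail P X (h v)) atTop (𝓝 (t ^ (-β))) :=
    (hRVX t ht).comp hL0
  have hmul := k1.mul hL1
  rw [mul_one] at hmul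
  apply hmul.congr'
  filter_upwards [] with v
  exact div_mul_div_aux (hposX (h v)).ne'

lemma lim_shrink (Y : Ω → ℝ) {γ : ℝ} (hRVY : RegVary (tail P Y) (-γ))
    {δ : ℝ} (hδ : 0 < δ) :
    Tendsto (fun v => tail P Y (v / (1 + δ)) / tail P Y v) atTop (𝓝 ((1 + δ) ^ γ)) := by
  have h1δ : (0:ℝ) < 1 + δ := by linarith
  have hfac := hRVY (1 + δ)⁻¹ (inv_pos.mpr h1δ)
  have hval : (((1 + δ)⁻¹ : ℝ)) ^ (-γ) = (1 + δ) ^ γ := by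
    rw [Real.inv_rpow h1δ.le, Real.rpow_neg h1δ.le, inv_inv]
  rw [hval] at hfac
  apply hfac.congr
  intro v
  rw [inv_mul_eq_div]
end mainlemmas

theorem stmt5 {Ω : Type*} [MeasurableSpace Ω] (P : Measure Ω) [IsProbabilityMeasure P]
    (X Y : Ω → ℝ) (hX : Measurable X) (hY : Measurable Y)
    (β γ lam : ℝ) (hβ : 0 < β) (hγ : 0 < γ) (hlam : 0 < lam)
    (hRVX : RegVary (tail P X) (-β)) (hRVY : RegVary (tail P Y) (-γ))
    (hsim : Tendsto (fun x => tail P X x / (lam * tail P Y (x ^ (β / γ)))) atTop (𝓝 1)) :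
    Tendsto (fun α => VaR P X α / (lam ^ (1 / β) * (VaR P Y α) ^ (γ / β)))
      (𝓝[<] (1 : ℝ)) (𝓝 1) := by
  have hposX : ∀ x, 0 < tail P X x := tail_pos P X hβ hRVX
  have hposY : ∀ x, 0 < tail P Y x := tail_pos P Y hγ hRVY
  have hL1 := lim_one P X Y hβ hγ hlam hRVY hposY hsim
  rw [Metric.tendsto_nhds]
  intro ε hε
  set ε' : ℝ := min (ε/2) (1/2) with hε'def
  have hε'pos : 0 < ε' := lt_min (by linarith) (by norm_num)
  have hε'lt1 : ε' < 1 := lt_of_le_of_lt (min_le_right _ _) (by norm_num)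
  have hε'ltε : ε' < ε := lt_of_le_of_lt (min_le_left _ _) (by linarith)
  have h1ε' : 0 < 1 - ε' := by linarith
  set A : ℝ := (1 - ε') ^ (-β) with hA
  have hA1 : 1 < A := by
    rw [hA, Real.one_lt_rpow_iff_of_pos h1ε']
    right
    exact ⟨by linarith, by linarith⟩
  have hApos : (0:ℝ) < A := by linarith
  set δ : ℝ := A ^ ((1:ℝ)/(2*γ)) - 1 with hδdef
  have h1δ : 1 + δ = A ^ ((1:ℝ)/(2*γ)) := by rw [hδdef]; ring
  have hδpos : 0 < δ := by
    have h2 : 1 < A ^ ((1:ℝ)/(2*γ)) := by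
      rw [Real.one_lt_rpow_iff_of_pos hApos]
      left
      exact ⟨hA1, by positivity⟩
    rw [hδdef]; linarith
  have hB : (1 + δ) ^ γ = A ^ ((1:ℝ)/2) := by
    rw [h1δ, ← Real.rpow_mul hApos.le]
    congr 1
    field_simp
  have hBA : A ^ ((1:ℝ)/2) < A := by
    nth_rewrite 2 [← Real.rpow_one A]
    exact (Real.rpow_lt_rpow_left_iff hA1).mpr (by norm_num)
  set c : ℝ := (A ^ ((1:ℝ)/2) + A)/2 with hc
  have hcB : (1+δ) ^ γ < c := by rw [hB, hc]; linarith
  have hcA : c < A := by rw [hc]; linarith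
  have hL2 := lim_t P X Y hβ hγ hlam hRVX hposX hL1
    (show (0:ℝ) < 1 + ε' by linarith)
  have hL2' := lim_t P X Y hβ hγ hlam hRVX hposX hL1 h1ε'
  rw [← hA] at hL2'
  have hL3 := lim_shrink P Y hRVY hδpos
  have hub : ∀ᶠ v in atTop,
      tail P X ((1+ε') * (lam ^ ((1:ℝ)/β) * v ^ (γ/β))) < tail P Y v := by
    have hlt1 : ((1+ε':ℝ)) ^ (-β) < 1 :=
      Real.rpow_lt_one_of_one_lt_of_neg (by linarith) (by linarith)
    filter_upwards [hL2.eventually_lt_const hlt1] with v hv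
    exact (div_lt_one (hposY v)).mp hv
  have hlb : ∀ᶠ v in atTop,
      tail P Y (v/(1+δ)) < tail P X ((1-ε') * (lam ^ ((1:ℝ)/β) * v ^ (γ/β))) := by
    filter_upwards [hL2'.eventually_const_lt hcA, hL3.eventually_lt_const hcB] with v h1 h2
    have hb := hposY v
    calc tail P Y (v/(1+δ)) < c * tail P Y v := (div_lt_iff₀ hb).mp h2
    _ < tail P X ((1-ε') * (lam ^ ((1:ℝ)/β) * v ^ (γ/β))) := (lt_div_iff₀ hb).mp h1
  obtain ⟨M, hM⟩ := (hub.and hlb).exists_forall_of_atTop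
  set M' : ℝ := max M 1 with hM'
  set m : ℝ := min (tail P X 0) (min (tail P Y 0) (tail P Y M')) with hm
  have hmpos : 0 < m := lt_min (hposX 0) (lt_min (hposY 0) (hposY M'))
  have hIoo : Set.Ioo (1 - m) 1 ∈ 𝓝[<] (1:ℝ) :=
    Ioo_mem_nhdsLT_of_mem ⟨by linarith, le_refl 1⟩
  filter_upwards [hIoo] with α hα
  obtain ⟨hα1, hα2⟩ := hα
  have hu : 0 < 1 - α := by linarith
  have hum : 1 - α < m := by linarith
  have hXm : 1 - α < tail P X 0 := lt_of_lt_of_le hum (min_le_left _ _)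
  have hYm : 1 - α < tail P Y 0 :=
    lt_of_lt_of_le hum (le_trans (min_le_right _ _) (min_le_left _ _))
  have hYM' : 1 - α < tail P Y M' :=
    lt_of_lt_of_le hum (le_trans (min_le_right _ _) (min_le_right _ _))
  have hneX : ∃ x, tail P X x ≤ 1 - α := tail_small P X hβ hRVX hu
  have hneY : ∃ x, tail P Y x ≤ 1 - α := tail_small P Y hγ hRVY hu
  set V : ℝ := VaR P Y α with hV
  have hVM : M' ≤ V := VaR_ge P Y hY hneY hYM'
  have hV1 : (1:ℝ) ≤ V := le_trans (le_max_right M 1) hVM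
  have hVpos : 0 < V := by linarith
  have htailV : tail P Y V ≤ 1 - α := tail_VaR_le P Y hY hneY hYm
  obtain ⟨hub', hlb'⟩ := hM V (le_trans (le_max_left M 1) hVM)
  have hhvpos : 0 < lam ^ ((1:ℝ)/β) * V ^ (γ/β) := by positivity
  have hU_le : VaR P X α ≤ (1+ε') * (lam ^ ((1:ℝ)/β) * V ^ (γ/β)) :=
    VaR_le P X hX hXm (le_trans (le_of_lt hub') htailV)
  have hdiv : V / (1+δ) < V := div_lt_self hVpos (by linarith)
  have h3 : 1 - α < tail P Y (V/(1+δ)) := lt_tail_of_lt_VaR P Y hY hYm hdiv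
  have hU_ge : (1-ε') * (lam ^ ((1:ℝ)/β) * V ^ (γ/β)) ≤ VaR P X α :=
    VaR_ge P X hX hneX (lt_trans h3 hlb')
  rw [Real.dist_eq]
  have hr1 : 1 - ε' ≤ VaR P X α / (lam ^ ((1:ℝ)/β) * V ^ (γ/β)) :=
    (le_div_iff₀ hhvpos).mpr (by linarith)
  have hr2 : VaR P X α / (lam ^ ((1:ℝ)/β) * V ^ (γ/β)) ≤ 1 + ε' :=
    (div_le_iff₀ hhvpos).mpr (by linarith)
  have habs : |VaR P X α / (lam ^ ((1:ℝ)/β) * V ^ (γ/β)) - 1| ≤ ε' :=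
    abs_le.mpr ⟨by linarith, by linarith⟩
  exact lt_of_le_of_lt habs hε'ltε
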